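/- Let H = (O, <_p) be a finite history over the snapshot-memory alphabet with n processes, where each operation is performed by a process π(·) < n, <_p relates only operations of the same process and totally orders the operations of each process, only process i performs the operations update(i, ·), and for every register k the values written by the successive updates of process k (in process order) are strictly increasing and positive. If H is sequentially consistent with respect to the snapshot-memory sequential specification T_snap, then for any two snapshot operations a and b performed by the same process with a <_p b, returning vectors A and B respectively, A k ≤ B k holds for all k < n: the snapshots of each process return pointwise non-decreasing vectors along its process order. -/

import Mathlib

/-!
STATEMENT 12: In a sequentially consistent snapshot memory in which each
process writes strictly increasing positive values, the snapshots of each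
process return pointwise non-decreasing vectors along its process order.
-/

/-- Operations of the snapshot memory over `n` registers. -/
inductive SnapOp (n : ℕ) : Type
  | update (k : Fin n) (v : ℕ) : SnapOp n
  | snap (A : Fin n → ℕ) : SnapOp n

/-- `snapRun M w`: `w` is a correct snapshot-memory behaviour starting from
memory state `M` (every snapshot returns the current state). -/
def snapRun {n : ℕ} : (Fin n → ℕ) → List (SnapOp n) → Prop
  | _, [] => True
  | M, SnapOp.update k v :: l => snapRun (Function.update M k v) l
  | M, SnapOp.snap A :: l => A = M ∧ snapRun M l

/-- The snapshot-memory sequential specification over `n` registers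
(all registers initialized to 0). -/
def TSnap (n : ℕ) : Set (List (SnapOp n)) := {w | snapRun (fun _ => 0) w}

/-- The (sub-)history with operations `S ⊆ O`, process order `p` and labelling
`lab` is sequentially consistent with respect to the sequential specification
`T`: some enumeration `l` of `S` respecting `p` yields a word of `T`. -/
def SeqConsList {O L : Type} (S : Set O) (p : O → O → Prop) (lab : O → L)
    (T : Set (List L)) : Prop :=
  ∃ l : List O, l.Nodup ∧ (∀ o, o ∈ l ↔ o ∈ S) ∧
    (∀ a b, a ∈ S → b ∈ S → p a b → List.Sublist [a, b] l) ∧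
    l.map lab ∈ T

/-- Values written to register `k` in a word, in order. -/
def updK {n : ℕ} (k : Fin n) : List (SnapOp n) → List ℕ :=
  List.filterMap (fun op => match op with
    | SnapOp.update k' v => if k' = k then some v else none
    | SnapOp.snap _ => none)

lemma updK_update {n : ℕ} (k k' : Fin n) (v : ℕ) (w : List (SnapOp n)) :
    updK k (SnapOp.update k' v :: w) =
      if k' = k then v :: updK k w else updK k w := by
  by_cases h : k' = k <;> simp [updK, List.filterMap_cons, h]

lemma updK_snap {n : ℕ} (k : Fin n) (A : Fin n → ℕ) (w : List (SnapOp n)) :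
    updK k (SnapOp.snap A :: w) = updK k w := rfl

/-- If the word is a correct run from `M` and the values written to `k`
form a `≤`-chain starting at `M k`, then any snapshot returns at least `M k`
in coordinate `k`. -/
lemma le_of_snap_mem {n : ℕ} (k : Fin n) :
    ∀ (w : List (SnapOp n)) (M : Fin n → ℕ), snapRun M w →
      List.Chain' (· ≤ ·) (M k :: updK k w) →
      ∀ B, SnapOp.snap B ∈ w → M k ≤ B k := by
  intro w
  induction w with
  | nil => intro M _ _ B hB; simp at hB
  | cons op w ih =>
    intro M hrun hch B hB
    cases op with
    | update k' v =>
      have hrun' : snapRun (Function.update M k' v) w := hrun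
      have hB' : SnapOp.snap B ∈ w := by
        rcases List.mem_cons.1 hB with h | h
        · exact absurd h (by simp)
        · exact h
      rw [updK_update] at hch
      by_cases hk : k' = k
      · subst hk
        rw [if_pos rfl, List.Chain', List.isChain_cons_cons] at hch
        have h1 : M k' ≤ v := hch.1
        have h2 : Function.update M k' v k' = v := by simp
        have := ih (Function.update M k' v) hrun' (by rw [h2]; exact hch.2) B hB'
        omega
      · have h2 : Function.update M k' v k = M k := by
          rw [Function.update_apply, if_neg (fun h => hk h.symm)]
        rw [if_neg hk] at hch
        have := ih (Function.update M k' v) hrun' (by rw [h2]; exact hch) B hB'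
        omega
    | snap C =>
      obtain ⟨rfl, hrun'⟩ := hrun
      rw [updK_snap] at hch
      rcases List.mem_cons.1 hB with h | h
      · obtain rfl : B = C := by injection h
        exact le_refl _
      · exact ih _ hrun' hch B h

/-- A snapshot `A` is dominated (in coordinate `k`) by every later snapshot `B`. -/
lemma snap_le_later {n : ℕ} (k : Fin n) :
    ∀ (u : List (SnapOp n)) (M : Fin n → ℕ) (A : Fin n → ℕ) (v : List (SnapOp n)),
      snapRun M (u ++ SnapOp.snap A :: v) →
      List.Chain' (· ≤ ·) (M k :: updK k (u ++ SnapOp.snap A :: v)) →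
      ∀ B, SnapOp.snap B ∈ v → A k ≤ B k := by
  intro u
  induction u with
  | nil =>
    intro M A v hrun hch B hB
    obtain ⟨rfl, hrun'⟩ := hrun
    rw [List.nil_append, updK_snap] at hch
    exact le_of_snap_mem k v _ hrun' hch B hB
  | cons op u ih =>
    intro M A v hrun hch B hB
    cases op with
    | update k' w =>
      have hrun' : snapRun (Function.update M k' w) (u ++ SnapOp.snap A :: v) := hrun
      rw [List.cons_append, updK_update] at hch
      by_cases hk : k' = k
      · subst hk
        rw [if_pos rfl, List.Chain', List.isChain_cons_cons] at hch
        have h2 : Function.update M k' w k' = w := by simp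
        exact ih (Function.update M k' w) A v hrun' (by rw [h2]; exact hch.2) B hB
      · have h2 : Function.update M k' w k = M k := by
          rw [Function.update_apply, if_neg (fun h => hk h.symm)]
        rw [if_neg hk] at hch
        exact ih (Function.update M k' w) A v hrun' (by rw [h2]; exact hch) B hB
    | snap C =>
      obtain ⟨rfl, hrun'⟩ := hrun
      rw [List.cons_append, updK_snap] at hch
      exact ih _ A v hrun' hch B hB

/-- A nodup list cannot contain both `[x, y]` and `[y, x]` as sublists. -/
lemma no_both_sublists {α : Type*} :
    ∀ (l : List α) (x y : α), l.Nodup → [x, y].Sublist l → [y, x].Sublist l → False := by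
  intro l
  induction l with
  | nil => intro x y _ h; cases h
  | cons z t ih =>
    intro x y hnd h1 h2
    have hz : z ∉ t := (List.nodup_cons.1 hnd).1
    have hnd' : t.Nodup := (List.nodup_cons.1 hnd).2
    cases h1 with
    | cons _ h1' =>
      cases h2 with
      | cons _ h2' => exact ih x y hnd' h1' h2'
      | cons_cons _ h2' =>
        -- z = y and [x,y] <+ t, so y ∈ t
        exact hz (h1'.subset (by simp))
    | cons_cons _ h1' =>
      -- z = x, [y] <+ t
      cases h2 with
      | cons _ h2' =>
        -- [y,x] <+ t, so x ∈ t
        exact hz (h2'.subset (by simp))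
      | cons_cons _ h2' =>
        -- z = y = x, [y] <+ t gives y ∈ t
        exact hz (h1'.subset (by simp))

lemma sublist_pair_decomp {α : Type*} :
    ∀ (l : List α) (x y : α), [x, y].Sublist l →
      ∃ u v, l = u ++ x :: v ∧ y ∈ v := by
  intro l
  induction l with
  | nil => intro x y h; cases h
  | cons z t ih =>
    intro x y h
    cases h with
    | cons _ h' =>
      obtain ⟨u, v, rfl, hy⟩ := ih x y h'
      exact ⟨z :: u, v, rfl, hy⟩
    | cons_cons _ h' =>
      exact ⟨[], t, rfl, h'.subset (by simp)⟩

/-- Let `H` be a finite history over the snapshot-memory alphabet where `p`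
(the process order, a strict partial order) relates only operations of the
same process `π`, totally orders the operations of each process, only process
`i` performs `update(i, ·)`, and for every register `k` the values written by
the successive updates of process `k` (in process order) are strictly
increasing and positive. If `H` is sequentially consistent w.r.t. `TSnap n`,
then for any two snapshots `a <_p b` of the same process returning `A` and
`B`, we have `A k ≤ B k` for all `k`. -/
theorem sc_snapshots_monotone_along_process {n : ℕ} {O : Type} [Fintype O]
    (p : O → O → Prop) (π : O → Fin n) (lab : O → SnapOp n)
    (hp_irrefl : ∀ a, ¬ p a a) (hp_trans : ∀ a b c, p a b → p b c → p a c)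
    (hproc : ∀ a b, p a b → π a = π b)
    (htotal : ∀ a b, π a = π b → a ≠ b → p a b ∨ p b a)
    (hown : ∀ o k v, lab o = SnapOp.update k v → π o = k)
    (hmono : ∀ u u' k v v', p u u' → lab u = SnapOp.update k v →
      lab u' = SnapOp.update k v' → v < v')
    (hpos : ∀ o k v, lab o = SnapOp.update k v → 0 < v)
    (hSC : SeqConsList Set.univ p lab (TSnap n))
    (a b : O) (A B : Fin n → ℕ)
    (hA : lab a = SnapOp.snap A) (hB : lab b = SnapOp.snap B)
    (hab : p a b) :
    ∀ k, A k ≤ B k := by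
  obtain ⟨l, hnd, hmem, hsub, hT⟩ := hSC
  intro k
  -- a appears before b in l
  have hab_sub : [a, b].Sublist l := hsub a b trivial trivial hab
  obtain ⟨u, v, heq, hbv⟩ := sublist_pair_decomp l a b hab_sub
  -- values written to k appear in l in nondecreasing order
  have hpw : l.Pairwise (fun o o' => ∀ x y, lab o = SnapOp.update k x →
      lab o' = SnapOp.update k y → x ≤ y) := by
    rw [List.pairwise_iff_forall_sublist]
    intro o o' hs x y ho ho'
    have hne : o ≠ o' := by
      rintro rfl
      have : ([o, o] : List O).Nodup := hs.nodup hnd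
      simp at this
    have hπ : π o = π o' := (hown o k x ho).trans (hown o' k y ho').symm
    rcases htotal o o' hπ hne with h | h
    · exact le_of_lt (hmono o o' k x y h ho ho')
    · exact absurd (hsub o' o trivial trivial h)
        (fun h' => no_both_sublists l o o' hnd hs h')
  have hvals : (updK k (l.map lab)).Pairwise (· ≤ ·) := by
    rw [updK, List.filterMap_map]
    refine List.Pairwise.filterMap _ ?_ hpw
    intro o o' h x hx y hy
    simp only [Function.comp] at hx hy
    apply h
    · revert hx; cases ho : lab o <;> simp <;> rintro rfl rfl <;> rfl
    · revert hy; cases ho' : lab o' <;> simp <;> rintro rfl rfl <;> rfl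
  have hchain : List.Chain' (· ≤ ·) (0 :: updK k (l.map lab)) := by
    rw [List.Chain', List.isChain_iff_pairwise, List.pairwise_cons]
    exact ⟨fun x _ => Nat.zero_le x, hvals⟩
  have hrun : snapRun (fun _ => 0) (l.map lab) := hT
  have heq' : l.map lab = u.map lab ++ SnapOp.snap A :: v.map lab := by
    rw [heq]; simp [hA]
  rw [heq'] at hrun hchain
  exact snap_le_later k (u.map lab) (fun _ => 0) A (v.map lab) hrun hchain B
    (by rw [← hB]; exact List.mem_map_of_mem (f := lab) hbv)
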